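/- Let T ∈ ℝ^{m×m} be symmetric with μI ⪯ T ⪯ ℓI (0 < μ ≤ ℓ), G ∈ ℝ^{p×m}, K ∈ ℝ^{r×p} with k_lo·I ⪯ KGGᵀKᵀ ⪯ k_hi·I and KG of full column rank, and let η_u, η_λ > 0 satisfy η_u > (4k_hi/(ℓμ))·η_λ. Set ρ = min{η_λ·k_lo/ℓ, η_u·μ/2}, F_z = [[-η_u T, -η_u GᵀKᵀ],[η_λ KG, 0]], and P_z = [[ℓI, GᵀKᵀ],[KG, ℓ(η_u/η_λ)I]]. Then F_zᵀP_z + P_zF_z + ρP_z ⪯ 0 (equivalently M := -(F_zᵀP_z + P_zF_z) - ρP_z ⪰ 0). -/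

import Mathlib

open Matrix

section Aux
variable {ι κ : Type*} [Fintype ι] [Fintype κ]

lemma psd_of_quadform {M : Matrix ι ι ℝ} (h1 : Mᵀ = M)
    (h2 : ∀ x : ι → ℝ, 0 ≤ x ⬝ᵥ M *ᵥ x) : M.PosSemidef := by
  refine PosSemidef.of_dotProduct_mulVec_nonneg ?_ fun x => by simpa using h2 x
  rw [Matrix.IsHermitian, conjTranspose_eq_transpose_of_trivial, h1]

lemma quadform_of_psd {M : Matrix ι ι ℝ} (h : M.PosSemidef) (x : ι → ℝ) :
    0 ≤ x ⬝ᵥ M *ᵥ x := by simpa using h.dotProduct_mulVec_nonneg x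

lemma transpose_of_psd {M : Matrix ι ι ℝ} (h : M.PosSemidef) : Mᵀ = M := by
  rw [← conjTranspose_eq_transpose_of_trivial]; exact h.1

lemma psd_smul {M : Matrix ι ι ℝ} (h : M.PosSemidef) {a : ℝ} (ha : 0 ≤ a) :
    (a • M).PosSemidef := by
  refine psd_of_quadform ?_ fun x => ?_
  · rw [transpose_smul, transpose_of_psd h]
  · rw [smul_mulVec, dotProduct_smul, smul_eq_mul]
    exact mul_nonneg ha (quadform_of_psd h x)

lemma psd_one_smul [DecidableEq ι] {a : ℝ} (ha : 0 ≤ a) :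
    (a • (1:Matrix ι ι ℝ)).PosSemidef :=
  psd_smul Matrix.PosSemidef.one ha

lemma psd_tmul (A : Matrix ι κ ℝ) : (Aᵀ * A).PosSemidef := by
  simpa [conjTranspose_eq_transpose_of_trivial] using
    Matrix.posSemidef_conjTranspose_mul_self A

lemma dot_self_nonneg (v : ι → ℝ) : 0 ≤ v ⬝ᵥ v := by
  simpa using dotProduct_star_self_nonneg v

lemma quad_upper {S : Matrix ι ι ℝ} {c : ℝ} [DecidableEq ι]
    (h : (c • (1:Matrix ι ι ℝ) - S).PosSemidef) (z : ι → ℝ) :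
    z ⬝ᵥ S *ᵥ z ≤ c * (z ⬝ᵥ z) := by
  have := quadform_of_psd h z
  simp only [Matrix.sub_mulVec, smul_mulVec, one_mulVec, dotProduct_sub,
    dotProduct_smul, smul_eq_mul] at this
  linarith

lemma quad_lower {S : Matrix ι ι ℝ} {c : ℝ} [DecidableEq ι]
    (h : (c • (1:Matrix ι ι ℝ) + S).PosSemidef) (z : ι → ℝ) :
    -(c * (z ⬝ᵥ z)) ≤ z ⬝ᵥ S *ᵥ z := by
  have := quadform_of_psd h z
  simp only [Matrix.add_mulVec, smul_mulVec, one_mulVec, dotProduct_add,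
    dotProduct_smul, smul_eq_mul] at this
  linarith

lemma sq_psd [DecidableEq ι] {S : Matrix ι ι ℝ} (hS : Sᵀ = S) {c : ℝ}
    (h1 : (c • (1:Matrix ι ι ℝ) - S).PosSemidef)
    (h2 : (c • (1:Matrix ι ι ℝ) + S).PosSemidef) :
    ((c^2) • (1:Matrix ι ι ℝ) - S*S).PosSemidef := by
  have hsymm : ∀ u v : ι → ℝ, u ⬝ᵥ S *ᵥ v = v ⬝ᵥ S *ᵥ u := by
    intro u v
    rw [dotProduct_mulVec, ← mulVec_transpose, hS, dotProduct_comm]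
  refine psd_of_quadform ?_ fun x => ?_
  · simp [transpose_mul, hS]
  · set y := S *ᵥ x with hy
    set a := x ⬝ᵥ x with ha
    set n := y ⬝ᵥ y with hn
    have hxy : x ⬝ᵥ S *ᵥ y = n := by
      rw [hsymm, hn, hy, dotProduct_mulVec, ← mulVec_transpose, hS]
    have goal_eq : x ⬝ᵥ ((c^2) • (1:Matrix ι ι ℝ) - S*S) *ᵥ x = c^2 * a - n := by
      rw [Matrix.sub_mulVec, smul_mulVec, one_mulVec, dotProduct_sub, dotProduct_smul,
        smul_eq_mul, ← Matrix.mulVec_mulVec, ← hy, ← ha, hxy]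
    rw [goal_eq, sub_nonneg]
    have han : 0 ≤ a := dot_self_nonneg x
    have hnn : 0 ≤ n := dot_self_nonneg y
    rcases eq_or_lt_of_le hnn with hn0 | hn0
    · rw [← hn0]; positivity
    have ha0 : 0 < a := by
      rcases eq_or_lt_of_le han with ha0 | ha0
      · exfalso
        have : x = 0 := by
          have := (dotProduct_self_eq_zero (v := x)).mp ha0.symm
          exact this
        rw [this] at hy
        simp [hy] at hn
        rw [hn] at hn0; simp at hn0
      · exact ha0
    have key : ∀ t : ℝ, 4 * t * n ≤ 2 * c * (a + t^2 * n) := by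
      intro t
      have e1 := quad_upper h1 (x + t • y)
      have e2 := quad_lower h2 (x - t • y)
      simp only [dotProduct_add, dotProduct_sub, add_dotProduct, sub_dotProduct,
        smul_dotProduct, dotProduct_smul, Matrix.mulVec_add, Matrix.mulVec_sub,
        Matrix.mulVec_smul, smul_eq_mul] at e1 e2
      rw [hsymm y x] at e1 e2
      rw [hxy] at e1 e2
      rw [dotProduct_comm y x] at e1 e2
      nlinarith [e1, e2]
    have hc : 0 ≤ c := by
      have u1 := quad_upper h1 y
      have u2 := quad_lower h2 y
      nlinarith [u1, u2]
    rcases eq_or_lt_of_le hc with hc0 | hc0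
    · exfalso; have := key 1; rw [← hc0] at this; nlinarith
    · have k2 := key (c * a / n)
      have h1' : (c * a / n)^2 * n = c^2 * a^2 / n := by field_simp
      rw [h1'] at k2
      have : 4 * (c * a / n) * n = 4 * c * a := by field_simp
      rw [this] at k2
      have hfrac : 2 * c * (a + c ^ 2 * a ^ 2 / n) * n = 2*c*a*n + 2*c^3*a^2 := by
        field_simp
      have k3 := mul_le_mul_of_nonneg_right k2 (le_of_lt hn0)
      rw [hfrac] at k3
      nlinarith [k3, mul_pos hc0 ha0]

lemma transpose_psd {A : Matrix ι κ ℝ} {k : ℝ} [DecidableEq ι] [DecidableEq κ] (hk : 0 ≤ k)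
    (h : (k • (1:Matrix ι ι ℝ) - A * Aᵀ).PosSemidef) :
    (k • (1:Matrix κ κ ℝ) - Aᵀ * A).PosSemidef := by
  refine psd_of_quadform (by simp [transpose_mul]) fun x => ?_
  set y := A *ᵥ x with hy
  set a := x ⬝ᵥ x with ha
  set n := y ⬝ᵥ y with hn
  have goal_eq : x ⬝ᵥ (k • (1:Matrix κ κ ℝ) - Aᵀ * A) *ᵥ x = k * a - n := by
    rw [Matrix.sub_mulVec, smul_mulVec, one_mulVec, dotProduct_sub, dotProduct_smul,
      smul_eq_mul, ← Matrix.mulVec_mulVec, ← hy, ← ha, dotProduct_mulVec, ← mulVec_transpose,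
      transpose_transpose, ← hy, hn]
  rw [goal_eq, sub_nonneg]
  have han : 0 ≤ a := dot_self_nonneg x
  have hnn : 0 ≤ n := dot_self_nonneg y
  rcases eq_or_lt_of_le hnn with hn0 | hn0
  · rw [← hn0]; positivity
  have hq : y ⬝ᵥ (A * Aᵀ) *ᵥ y ≤ k * n := by
    have := quadform_of_psd h y
    simp only [Matrix.sub_mulVec, smul_mulVec, one_mulVec, dotProduct_sub,
      dotProduct_smul, smul_eq_mul] at this
    rw [← hn] at this; linarith
  have hq2 : y ⬝ᵥ (A * Aᵀ) *ᵥ y = (Aᵀ *ᵥ y) ⬝ᵥ (Aᵀ *ᵥ y) := by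
    rw [← Matrix.mulVec_mulVec, dotProduct_mulVec, ← mulVec_transpose]
  have hcs : n^2 ≤ a * ((Aᵀ *ᵥ y) ⬝ᵥ (Aᵀ *ᵥ y)) := by
    have hne : x ⬝ᵥ (Aᵀ *ᵥ y) = n := by
      rw [dotProduct_mulVec, ← mulVec_transpose, transpose_transpose, ← hy, ← hn]
    rw [← hne]
    have := Finset.sum_mul_sq_le_sq_mul_sq Finset.univ x (Aᵀ *ᵥ y)
    simpa [dotProduct, pow_two, mul_mul_mul_comm, ha] using this
  rw [hq2] at hq
  nlinarith [hcs, hq, han, hn0]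

lemma dot_sum_elim (x : ι ⊕ κ → ℝ) (u : ι → ℝ) (v : κ → ℝ) :
    x ⬝ᵥ Sum.elim u v = (x ∘ Sum.inl) ⬝ᵥ u + (x ∘ Sum.inr) ⬝ᵥ v := by
  conv_lhs => rw [← Sum.elim_comp_inl_inr x]
  rw [sumElim_dotProduct_sumElim]

lemma psd_fromBlocks_diag {D1 : Matrix ι ι ℝ} {D2 : Matrix κ κ ℝ}
    (h1 : D1.PosSemidef) (h2 : D2.PosSemidef) :
    (fromBlocks D1 0 0 D2).PosSemidef := by
  refine psd_of_quadform ?_ fun x => ?_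
  · rw [fromBlocks_transpose, transpose_of_psd h1, transpose_of_psd h2]
    simp
  · rw [fromBlocks_mulVec]
    simp only [Matrix.zero_mulVec, add_zero, zero_add]
    rw [dot_sum_elim]
    exact add_nonneg (by simpa using h1.dotProduct_mulVec_nonneg (x ∘ Sum.inl)) (by simpa using h2.dotProduct_mulVec_nonneg (x ∘ Sum.inr))
end Aux

set_option maxHeartbeats 1000000 in
theorem stmt_13 {m p r : ℕ}
    (T : Matrix (Fin m) (Fin m) ℝ)
    (G : Matrix (Fin p) (Fin m) ℝ) (K : Matrix (Fin r) (Fin p) ℝ)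
    (μ ℓ klo khi ηu ηl : ℝ)
    (hμ : 0 < μ) (hμℓ : μ ≤ ℓ)
    (hT : T.IsSymm)
    (hTlo : (T - μ • (1 : Matrix (Fin m) (Fin m) ℝ)).PosSemidef)
    (hThi : (ℓ • (1 : Matrix (Fin m) (Fin m) ℝ) - T).PosSemidef)
    (hklo : 0 < klo) (hk : klo ≤ khi)
    (hlo : (K * G * Gᵀ * Kᵀ - klo • (1 : Matrix (Fin r) (Fin r) ℝ)).PosSemidef)
    (hhi : (khi • (1 : Matrix (Fin r) (Fin r) ℝ) - K * G * Gᵀ * Kᵀ).PosSemidef)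
    -- KG has full column rank
    (hrank : Function.Injective fun v : Fin m → ℝ => (K * G) *ᵥ v)
    (hηu : 0 < ηu) (hηl : 0 < ηl)
    (hgain : ηu > 4 * khi / (ℓ * μ) * ηl) :
    (-( (Matrix.fromBlocks (-ηu • T) (-ηu • (Gᵀ * Kᵀ)) (ηl • (K * G)) 0)ᵀ *
          (Matrix.fromBlocks (ℓ • 1) (Gᵀ * Kᵀ) (K * G) ((ℓ * (ηu / ηl)) • 1)) +
        (Matrix.fromBlocks (ℓ • 1) (Gᵀ * Kᵀ) (K * G) ((ℓ * (ηu / ηl)) • 1)) *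
          (Matrix.fromBlocks (-ηu • T) (-ηu • (Gᵀ * Kᵀ)) (ηl • (K * G)) 0)) -
      min (ηl * klo / ℓ) (ηu * μ / 2) •
        (Matrix.fromBlocks (ℓ • 1) (Gᵀ * Kᵀ) (K * G)
          ((ℓ * (ηu / ηl)) • 1))).PosSemidef := by
  have hℓ : 0 < ℓ := hμ.trans_le hμℓ
  have hkhi : 0 < khi := hklo.trans_le hk
  have hηu0 : ηu ≠ 0 := ne_of_gt hηu
  have hηl0 : ηl ≠ 0 := ne_of_gt hηl
  have hGK : Gᵀ * Kᵀ = (K * G)ᵀ := (transpose_mul K G).symm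
  rw [hGK]
  rw [Matrix.mul_assoc, hGK] at hlo hhi
  set A : Matrix (Fin r) (Fin m) ℝ := K * G with hA
  set ρ : ℝ := min (ηl * klo / ℓ) (ηu * μ / 2) with hρ
  have hρ1 : ρ ≤ ηl * klo / ℓ := min_le_left _ _
  have hρ2 : ρ ≤ ηu * μ / 2 := min_le_right _ _
  have hρ0 : 0 < ρ := lt_min (by positivity) (by positivity)
  have hρℓ : ρ * ℓ ≤ ηl * klo := by
    rw [← le_div_iff₀ hℓ]; exact hρ1
  have hgain' : 4 * khi * ηl < ηu * (ℓ * μ) := by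
    rw [gt_iff_lt, div_mul_eq_mul_div, div_lt_iff₀ (by positivity)] at hgain
    nlinarith [hgain]
  have hρsq : ρ^2 / ηu ≤ ρ * μ / 2 := by
    rw [div_le_iff₀ hηu]
    nlinarith [hρ2, hρ0]
  clear_value ρ
  have hTt : Tᵀ = T := hT
  -- abbreviations
  set s : Matrix (Fin m) (Fin m) ℝ := ηu • T - ρ • 1 with hs
  have hst : sᵀ = s := by rw [hs]; simp [transpose_smul, hTt]
  set c0 : ℝ := ηu*ℓ*μ + 2*ρ*μ - ρ*ℓ - ρ^2/ηu - 2*ηl*khi with hc0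
  have hc00 : 0 ≤ c0 := by
    rw [hc0]
    have h1 : ηl * klo ≤ ηl * khi := by nlinarith [hk, hηl.le]
    nlinarith [hρℓ, hρsq, hgain', hρ0, hμ]
  set D1 : Matrix (Fin m) (Fin m) ℝ :=
    ηu • (ℓ • T - T*T) + (ηu*ℓ + 2*ρ) • (T - μ • 1) +
      (2*ηl) • (khi • 1 - Aᵀ*A) + c0 • 1 with hD1
  set D2 : Matrix (Fin r) (Fin r) ℝ :=
    ηu • (A*Aᵀ - klo • 1) + (ηu*klo - ρ*(ℓ*(ηu/ηl))) • 1 with hD2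
  set N : Matrix (Fin m) (Fin m ⊕ Fin r) ℝ := fromCols s (ηu • Aᵀ) with hN
  -- the key algebraic identity
  have key :
      (-( (Matrix.fromBlocks (-ηu • T) (-ηu • Aᵀ) (ηl • A) 0)ᵀ *
          (Matrix.fromBlocks (ℓ • 1) Aᵀ A ((ℓ * (ηu / ηl)) • 1)) +
        (Matrix.fromBlocks (ℓ • 1) Aᵀ A ((ℓ * (ηu / ηl)) • 1)) *
          (Matrix.fromBlocks (-ηu • T) (-ηu • Aᵀ) (ηl • A) 0)) -
      ρ • (Matrix.fromBlocks (ℓ • 1) Aᵀ A ((ℓ * (ηu / ηl)) • 1)))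
      = fromBlocks D1 0 0 D2 + ηu⁻¹ • (Nᵀ * N) := by
    rw [hN, transpose_fromCols, fromRows_mul_fromCols, hst]
    rw [transpose_smul, transpose_transpose]
    rw [fromBlocks_transpose, fromBlocks_multiply, fromBlocks_multiply,
      fromBlocks_smul, fromBlocks_smul, fromBlocks_add, fromBlocks_neg, fromBlocks_add,
      sub_eq_add_neg, fromBlocks_neg, fromBlocks_add]
    rw [fromBlocks_inj]
    refine ⟨?_, ?_, ?_, ?_⟩
    · rw [hD1, hs]
      simp only [transpose_smul, transpose_neg, transpose_mul, transpose_transpose,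
        transpose_one, transpose_zero, hTt, Matrix.smul_mul, Matrix.mul_smul,
        Matrix.mul_one, Matrix.one_mul, Matrix.mul_sub, Matrix.sub_mul,
        smul_smul, neg_smul, smul_neg, Matrix.neg_mul, Matrix.mul_neg,
        Matrix.mul_zero, Matrix.zero_mul, add_zero, zero_add, smul_sub, smul_add]
      rw [hc0]
      match_scalars
      all_goals field_simp
      all_goals ring
    · rw [hs]
      simp only [transpose_smul, transpose_neg, transpose_mul, transpose_transpose,
        transpose_one, transpose_zero, hTt, Matrix.smul_mul, Matrix.mul_smul,
        Matrix.mul_one, Matrix.one_mul, Matrix.mul_sub, Matrix.sub_mul,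
        smul_smul, neg_smul, smul_neg, Matrix.neg_mul, Matrix.mul_neg,
        Matrix.mul_zero, Matrix.zero_mul, add_zero, zero_add, smul_sub, smul_add]
      match_scalars
      all_goals field_simp
      all_goals ring
    · rw [hs]
      simp only [transpose_smul, transpose_neg, transpose_mul, transpose_transpose,
        transpose_one, transpose_zero, hTt, Matrix.smul_mul, Matrix.mul_smul,
        Matrix.mul_one, Matrix.one_mul, Matrix.mul_sub, Matrix.sub_mul,
        smul_smul, neg_smul, smul_neg, Matrix.neg_mul, Matrix.mul_neg,
        Matrix.mul_zero, Matrix.zero_mul, add_zero, zero_add, smul_sub, smul_add]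
      match_scalars
      all_goals field_simp
      all_goals ring
    · rw [hD2]
      simp only [transpose_smul, transpose_neg, transpose_mul, transpose_transpose,
        transpose_one, transpose_zero, hTt, Matrix.smul_mul, Matrix.mul_smul,
        Matrix.mul_one, Matrix.one_mul, Matrix.mul_sub, Matrix.sub_mul,
        smul_smul, neg_smul, smul_neg, Matrix.neg_mul, Matrix.mul_neg,
        Matrix.mul_zero, Matrix.zero_mul, add_zero, zero_add, smul_sub, smul_add]
      match_scalars
      all_goals field_simp
      all_goals ring
  rw [key]
  -- positive semidefiniteness of the pieces
  have hTpsd : T.PosSemidef := by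
    have := hTlo.add (psd_one_smul (ι := Fin m) hμ.le)
    simpa using this
  have hquad : (ℓ • T - T*T).PosSemidef := by
    have hSdef : (ℓ/2) • (1:Matrix (Fin m) (Fin m) ℝ) - (T - (ℓ/2) • 1) =
        ℓ • 1 - T := by module
    have hSdef2 : (ℓ/2) • (1:Matrix (Fin m) (Fin m) ℝ) + (T - (ℓ/2) • 1) = T := by
      module
    have hTS : (T - (ℓ/2) • (1:Matrix (Fin m) (Fin m) ℝ))ᵀ = T - (ℓ/2) • 1 := by
      simp [transpose_sub, transpose_smul, hTt]
    have := sq_psd hTS (c := ℓ/2) (by rw [hSdef]; exact hThi) (by rw [hSdef2]; exact hTpsd)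
    have heq : ((ℓ/2)^2) • (1:Matrix (Fin m) (Fin m) ℝ) -
        (T - (ℓ/2) • 1) * (T - (ℓ/2) • 1) = ℓ • T - T*T := by
      simp only [Matrix.mul_sub, Matrix.sub_mul, Matrix.smul_mul, Matrix.mul_smul,
        Matrix.mul_one, Matrix.one_mul, smul_smul, smul_sub]
      module
    rwa [heq] at this
  have hD1psd : D1.PosSemidef := by
    rw [hD1]
    refine (((psd_smul hquad hηu.le).add (psd_smul hTlo (by positivity))).add
      (psd_smul ?_ (by positivity))).add (psd_one_smul hc00)
    exact transpose_psd (A := A) hkhi.le hhi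
  have hρc : ρ * (ℓ * (ηu / ηl)) ≤ ηu * klo := by
    have h1 : ρ * (ℓ * (ηu / ηl)) = (ρ * ℓ) * ηu / ηl := by ring
    rw [h1, div_le_iff₀ hηl]
    nlinarith [hρℓ, hηu.le]
  have hD2psd : D2.PosSemidef := by
    rw [hD2]
    exact (psd_smul hlo hηu.le).add (psd_one_smul (by linarith [hρc]))
  exact (psd_fromBlocks_diag hD1psd hD2psd).add (psd_smul (psd_tmul N) (by positivity))
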